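/- There exists a finitely additive probability measure μ on the power set of ℤ such that μ(f(A)) = μ(A) for every subset A ⊆ ℤ and every bi-Lipschitz bijection f : ℤ → ℤ. -/

import Mathlib

open Finset Filter
open scoped Classical

/-- Discrete intermediate value for K-Lipschitz maps on ℤ. -/
lemma ivtZ (g : ℤ → ℤ) (K : ℤ) (hstep : ∀ x, |g (x+1) - g x| ≤ K)
    (n u : ℤ) (hgu : g u ≤ n) : ∀ v : ℤ, u ≤ v → n < g v →
    ∃ w, u ≤ w ∧ w ≤ v ∧ n < g w ∧ g w ≤ n + K := by
  have key : ∀ m : ℕ, ∀ v : ℤ, v = u + m → n < g v →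
      ∃ w, u ≤ w ∧ w ≤ v ∧ n < g w ∧ g w ≤ n + K := by
    intro m
    induction m with
    | zero => intro v hv hgv; exfalso; subst hv; simp at hgv; omega
    | succ k ih =>
      intro v hv hgv
      rcases le_or_gt (g (v - 1)) n with h | h
      · refine ⟨v, by omega, le_refl _, hgv, ?_⟩
        have h2 := abs_le.mp (hstep (v - 1))
        simp only [sub_add_cancel] at h2
        omega
      · obtain ⟨w, h1, h2, h3, h4⟩ := ih (v - 1) (by push_cast [hv]; ring) h
        exact ⟨w, h1, by omega, h3, h4⟩
  intro v huv hgv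
  obtain ⟨m, hm⟩ := Int.le.dest huv
  exact key m v (by omega) hgv

/-- Core counting: for a bi-Lipschitz bijection of ℤ sending the positive ray to
positive values and the negative ray to negative values, the number of points of
`[-n, n]` mapped above `n` is bounded independently of `n`. -/
lemma count_pos (g : ℤ → ℤ) (hg : Function.Bijective g) (K L M : ℤ)
    (hK1 : 1 ≤ K) (hL1 : 1 ≤ L) (hM1 : 1 ≤ M)
    (hco : ∀ x y, |x - y| ≤ L * |g x - g y|)
    (hstep : ∀ x, |g (x+1) - g x| ≤ K)
    (hpos : ∀ x, M ≤ x → K < g x)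
    (hneg : ∀ x, x ≤ -M → g x < -K) :
    ∃ C : ℤ, 0 ≤ C ∧ ∀ n : ℤ, 0 ≤ n →
      (((Finset.Icc (-n) n).filter (fun x => n < g x)).card : ℤ) ≤ C := by
  classical
  set q := Function.invFun g (K+1) with hqdef
  have hgq : g q = K + 1 := Function.rightInverse_invFun hg.2 (K+1)
  set Q := L * (K + 1 + |g 0|) with hQdef
  have habs : |(K + 1) - g 0| ≤ K + 1 + |g 0| := by
    have := abs_sub_abs_le_abs_sub (K+1) (g 0)
    have h1 := abs_sub (K+1) (g 0)
    calc |(K+1) - g 0| ≤ |K+1| + |g 0| := abs_sub _ _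
    _ = K + 1 + |g 0| := by rw [abs_of_pos (by omega)]
  have hqQ : q ≤ Q := by
    have h1 := hco q 0
    rw [hgq] at h1
    have h2 : L * |K + 1 - g 0| ≤ L * (K + 1 + |g 0|) :=
      mul_le_mul_of_nonneg_left habs (by omega)
    have h3 : q ≤ |q - 0| := by rw [sub_zero]; exact le_abs_self q
    omega
  have hQ0 : 0 ≤ Q := by positivity
  have hLK : 1 ≤ L * K := one_le_mul_of_one_le_of_one_le hL1 hK1
  set D := L * K with hDdef
  set P := max Q M with hPdef
  have hMP : M ≤ P := le_max_right _ _
  have hQP : Q ≤ P := le_max_left _ _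
  refine ⟨2*P + 2*D + M + 2*K + 10, by omega, ?_⟩
  intro n hn
  rcases le_or_gt n K with hsmall | hbig
  · -- trivial bound for small n
    have h1 : ((Finset.Icc (-n) n).filter (fun x => n < g x)).card
        ≤ (Finset.Icc (-n) n).card := Finset.card_filter_le _ _
    have h2 := Int.card_Icc (-n) n
    have h3 : ((Finset.Icc (-n) n).card : ℤ) = n + 1 - (-n) := by
      rw [h2]; omega
    have h4 : (((Finset.Icc (-n) n).filter (fun x => n < g x)).card : ℤ)
        ≤ ((Finset.Icc (-n) n).card : ℤ) := by exact_mod_cast h1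
    omega
  · -- main case : n ≥ K + 1
    set V := L * n + L * |g 0| + M with hVdef
    have hV : ∀ v, V ≤ v → n < g v := by
      intro v hv
      have hvM : M ≤ v := by
        have : 0 ≤ L * n := by positivity
        have : 0 ≤ L * |g 0| := by positivity
        omega
      have hgv : K < g v := hpos v hvM
      have h1 := hco v 0
      have h2 : |g v - g 0| ≤ g v + |g 0| := by
        calc |g v - g 0| ≤ |g v| + |g 0| := abs_sub _ _
        _ = g v + |g 0| := by rw [abs_of_pos (by omega)]
      have h3 : L * |g v - g 0| ≤ L * (g v + |g 0|) :=
        mul_le_mul_of_nonneg_left h2 (by omega)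
      have h4 : v ≤ |v - 0| := by rw [sub_zero]; exact le_abs_self v
      have h5 : L * n < L * g v := by nlinarith [abs_nonneg (g 0)]
      exact lt_of_mul_lt_mul_left h5 (by omega)
    have claimA : ∀ z, g z ≤ n → ∃ w, z ≤ w ∧ n < g w ∧ g w ≤ n + K := by
      intro z hz
      have hzV : z ≤ V := by
        by_contra h
        exact absurd hz (not_le.mpr (hV z (by omega)))
      obtain ⟨w, h1, _, h3, h4⟩ := ivtZ g K hstep n z hz V hzV (hV V le_rfl)
      exact ⟨w, h1, h3, h4⟩
    have hdiam : ∀ w w', n < g w → g w ≤ n + K → n < g w' → g w' ≤ n + K →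
        |w - w'| ≤ D := by
      intro w w' a1 a2 a3 a4
      have h1 : |g w - g w'| ≤ K := abs_le.mpr ⟨by omega, by omega⟩
      calc |w - w'| ≤ L * |g w - g w'| := hco w w'
      _ ≤ D := mul_le_mul_of_nonneg_left h1 (by omega)
    obtain ⟨w0, hw0q, hw0a, hw0b⟩ := claimA q (by omega)
    -- counting preimages of [1, n] gives a lower bound on w0
    have hinvinj : Function.Injective (Function.invFun g) :=
      Function.LeftInverse.injective (g := g) (Function.rightInverse_invFun hg.2)
    have hw0low : n - D - M ≤ w0 := by
      set T := (Finset.Icc (1:ℤ) n).image (Function.invFun g) with hTdef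
      have hTcard : T.card = (Finset.Icc (1:ℤ) n).card :=
        Finset.card_image_of_injective _ hinvinj
      have hTsub : T ⊆ Finset.Icc (-M+1) (w0 + D) := by
        intro z hz
        simp only [hTdef, Finset.mem_image, Finset.mem_Icc] at hz
        obtain ⟨y, ⟨hy1, hy2⟩, rfl⟩ := hz
        have hgz : g (Function.invFun g y) = y := Function.rightInverse_invFun hg.2 y
        rw [Finset.mem_Icc]
        constructor
        · by_contra h
          have := hneg (Function.invFun g y) (by omega)
          omega
        · obtain ⟨w, hw1, hw2, hw3⟩ := claimA (Function.invFun g y) (by omega)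
          have := hdiam w w0 hw2 hw3 hw0a hw0b
          have := abs_le.mp this
          omega
      have h1 := Finset.card_le_card hTsub
      rw [hTcard] at h1
      have h2 := Int.card_Icc (1:ℤ) n
      have h3 := Int.card_Icc (-M+1) (w0 + D)
      rw [h2, h3] at h1
      omega
    -- main inclusion
    have hsub : (Finset.Icc (-n) n).filter (fun x => n < g x)
        ⊆ Finset.Icc (-P) P ∪ Finset.Icc (n - 2*D - M) n := by
      intro x hx
      simp only [Finset.mem_filter, Finset.mem_Icc] at hx
      obtain ⟨⟨hx1, hx2⟩, hx3⟩ := hx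
      rw [Finset.mem_union, Finset.mem_Icc, Finset.mem_Icc]
      rcases le_or_gt x (-M) with h | h
      · exact absurd hx3 (by have := hneg x h; omega)
      rcases lt_or_ge x M with h2 | h2
      · left; omega
      rcases lt_or_ge x q with h3 | h3
      · left; omega
      · right
        obtain ⟨w, hw1, _, hw3, hw4⟩ := ivtZ g K hstep n q (by omega) x h3 hx3
        have := hdiam w w0 hw3 hw4 hw0a hw0b
        have := abs_le.mp this
        omega
    have h1 := Finset.card_le_card hsub
    have h2 := Finset.card_union_le (Finset.Icc (-P) P) (Finset.Icc (n - 2*D - M) n)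
    have h3 := Int.card_Icc (-P) P
    have h4 := Int.card_Icc (n - 2*D - M) n
    have h5 : ((Finset.Icc (-n) n).filter (fun x => n < g x)).card
        ≤ (Finset.Icc (-P) P).card + (Finset.Icc (n - 2*D - M) n).card :=
      le_trans h1 h2
    have h6 : (((Finset.Icc (-n) n).filter (fun x => n < g x)).card : ℤ)
        ≤ ((Finset.Icc (-P) P).card : ℤ) + ((Finset.Icc (n - 2*D - M) n).card : ℤ) := by
      exact_mod_cast h5
    rw [h3, h4] at h6
    omega

/-- Both escape directions bounded, given normalized signs. -/
lemma count_out (g : ℤ → ℤ) (hg : Function.Bijective g) (K L M : ℤ)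
    (hK1 : 1 ≤ K) (hL1 : 1 ≤ L) (hM1 : 1 ≤ M)
    (hco : ∀ x y, |x - y| ≤ L * |g x - g y|)
    (hstep : ∀ x, |g (x+1) - g x| ≤ K)
    (hpos : ∀ x, M ≤ x → K < g x)
    (hneg : ∀ x, x ≤ -M → g x < -K) :
    ∃ C : ℤ, 0 ≤ C ∧ ∀ n : ℤ, 0 ≤ n →
      (((Finset.Icc (-n) n).filter (fun x => n < |g x|)).card : ℤ) ≤ C := by
  classical
  obtain ⟨C1, hC1, hcount1⟩ := count_pos g hg K L M hK1 hL1 hM1 hco hstep hpos hneg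
  set g' : ℤ → ℤ := fun x => -g (-x) with hg'def
  have hg'bij : Function.Bijective g' := by
    constructor
    · intro a b hab
      simp only [hg'def, neg_inj] at hab
      have := hg.1 hab
      omega
    · intro y
      obtain ⟨x, hx⟩ := hg.2 (-y)
      exact ⟨-x, by simp [hg'def, hx]⟩
  have hco' : ∀ x y, |x - y| ≤ L * |g' x - g' y| := by
    intro x y
    have h1 : |g' x - g' y| = |g (-x) - g (-y)| := by
      simp only [hg'def]
      rw [show -g (-x) - -g (-y) = -(g (-x) - g (-y)) by ring, abs_neg]
    rw [h1]
    have := hco (-x) (-y)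
    have h2 : |(-x) - (-y)| = |x - y| := by
      rw [show (-x) - (-y) = -(x - y) by ring, abs_neg]
    omega
  have hstep' : ∀ x, |g' (x+1) - g' x| ≤ K := by
    intro x
    have h1 : |g' (x+1) - g' x| = |g ((-x-1) + 1) - g (-x-1)| := by
      simp only [hg'def]
      rw [show -(x+1) = -x-1 by ring, show (-x-1) + 1 = -x by ring]
      rw [show -g (-x-1) - -g (-x) = g (-x) - g (-x-1) by ring]
    rw [h1]; exact hstep (-x-1)
  have hpos' : ∀ x, M ≤ x → K < g' x := by
    intro x hx
    have := hneg (-x) (by omega)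
    simp only [hg'def]; omega
  have hneg' : ∀ x, x ≤ -M → g' x < -K := by
    intro x hx
    have := hpos (-x) (by omega)
    simp only [hg'def]; omega
  obtain ⟨C2, hC2, hcount2⟩ := count_pos g' hg'bij K L M hK1 hL1 hM1 hco' hstep' hpos' hneg'
  refine ⟨C1 + C2, by omega, ?_⟩
  intro n hn
  have hcardneg : ((Finset.Icc (-n) n).filter (fun x => g x < -n)).card
      = ((Finset.Icc (-n) n).filter (fun x => n < g' x)).card := by
    refine Finset.card_nbij' (fun a => -a) (fun a => -a) ?_ ?_ ?_ ?_
    · intro a ha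
      simp only [Finset.mem_coe, Finset.mem_filter, Finset.mem_Icc] at ha
      simp only [Finset.mem_coe, Finset.mem_filter, Finset.mem_Icc, hg'def, neg_neg]
      omega
    · intro a ha
      simp only [Finset.mem_coe, Finset.mem_filter, Finset.mem_Icc, hg'def] at ha
      simp only [Finset.mem_coe, Finset.mem_filter, Finset.mem_Icc]
      omega
    · intro a _
      simp
    · intro a _
      simp
  have hsub : (Finset.Icc (-n) n).filter (fun x => n < |g x|)
      ⊆ (Finset.Icc (-n) n).filter (fun x => n < g x)
        ∪ (Finset.Icc (-n) n).filter (fun x => g x < -n) := by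
    intro x hx
    simp only [Finset.mem_filter, Finset.mem_union, Finset.mem_Icc] at hx ⊢
    rcases abs_cases (g x) with ⟨h, _⟩ | ⟨h, _⟩ <;> omega
  have h1 := Finset.card_le_card hsub
  have h2 := Finset.card_union_le ((Finset.Icc (-n) n).filter (fun x => n < g x))
    ((Finset.Icc (-n) n).filter (fun x => g x < -n))
  have h3 := hcount1 n hn
  have h4 := hcount2 n hn
  rw [hcardneg] at h2
  have h5 : (((Finset.Icc (-n) n).filter (fun x => n < |g x|)).card : ℤ)
      ≤ (((Finset.Icc (-n) n).filter (fun x => n < g x)).card : ℤ)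
        + (((Finset.Icc (-n) n).filter (fun x => n < g' x)).card : ℤ) := by
    exact_mod_cast le_trans h1 h2
  omega

/-- Eventual sign normalization for a bi-Lipschitz bijection of ℤ. -/
lemma sign_lemma (g : ℤ → ℤ) (hg : Function.Bijective g) (K L : ℤ)
    (hK1 : 1 ≤ K) (hL1 : 1 ≤ L)
    (hLip : ∀ x y, |g x - g y| ≤ K * |x - y|)
    (hco : ∀ x y, |x - y| ≤ L * |g x - g y|) :
    ∃ ε M : ℤ, (ε = 1 ∨ ε = -1) ∧ 1 ≤ M ∧
      (∀ x, M ≤ x → K < ε * g x) ∧ (∀ x, x ≤ -M → ε * g x < -K) := by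
  classical
  have hstep : ∀ x, |g (x+1) - g x| ≤ K := by
    intro x
    have := hLip (x+1) x
    simp only [add_sub_cancel_left] at this
    simpa using this
  set M := L * (K + |g 0|) + 1 with hMdef
  have hM1 : 1 ≤ M := by
    have h0 : 0 ≤ L * (K + |g 0|) := by positivity
    omega
  have hbig : ∀ x : ℤ, M ≤ |x| → K < |g x| := by
    intro x hx
    have h1 := hco x 0
    rw [sub_zero] at h1
    have h2 : |g x - g 0| ≤ |g x| + |g 0| := abs_sub _ _
    have h3 : L * |g x - g 0| ≤ L * (|g x| + |g 0|) :=
      mul_le_mul_of_nonneg_left h2 (by omega)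
    by_contra h
    push_neg at h
    have h4 : L * (|g x| + |g 0|) ≤ L * (K + |g 0|) :=
      mul_le_mul_of_nonneg_left (by omega) (by omega)
    omega
  -- sign constant on positive ray
  have hray : ∀ x : ℤ, M ≤ x → (K < g M → K < g x) ∧ (g M < -K → g x < -K) := by
    refine Int.le_induction ⟨fun h => h, fun h => h⟩ ?_
    intro v hv ih
    have ha := hbig (v+1) (by rw [abs_of_pos (by omega)]; omega)
    have hs := abs_le.mp (hstep v)
    refine ⟨fun hM => ?_, fun hM => ?_⟩
    · have hiv := ih.1 hM
      rcases lt_abs.mp ha with h | h <;> omega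
    · have hiv := ih.2 hM
      rcases lt_abs.mp ha with h | h <;> omega
  have hray' : ∀ x : ℤ, x ≤ -M → (K < g (-M) → K < g x) ∧ (g (-M) < -K → g x < -K) := by
    refine Int.le_induction_down ⟨fun h => h, fun h => h⟩ ?_
    intro v hv ih
    have ha := hbig (v-1) (by rw [abs_of_neg (by omega)]; omega)
    have hs := abs_le.mp (hstep (v-1))
    simp only [sub_add_cancel] at hs
    refine ⟨fun hM => ?_, fun hM => ?_⟩
    · have hiv := ih.1 hM
      rcases lt_abs.mp ha with h | h <;> omega
    · have hiv := ih.2 hM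
      rcases lt_abs.mp ha with h | h <;> omega
  -- bound on the middle
  set B := ((Finset.Icc (-M) M).image (fun x => |g x|)).max' (by
    apply Finset.image_nonempty.mpr
    exact ⟨0, by simp only [Finset.mem_Icc]; omega⟩) with hBdef
  have hBbound : ∀ x, -M ≤ x → x ≤ M → |g x| ≤ B := by
    intro x h1 h2
    apply Finset.le_max'
    apply Finset.mem_image_of_mem
    simp only [Finset.mem_Icc]; omega
  have hB0 : 0 ≤ B := le_trans (abs_nonneg (g 0)) (hBbound 0 (by omega) (by omega))
  -- the two rays have opposite signs
  have hMa := hbig M (le_of_eq (abs_of_pos (by omega)).symm)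
  have hMb := hbig (-M) (by rw [abs_of_neg (by omega)]; omega)
  have hopp : ¬ (K < g M ∧ K < g (-M)) ∧ ¬ (g M < -K ∧ g (-M) < -K) := by
    constructor
    · rintro ⟨h1, h2⟩
      obtain ⟨x, hx⟩ := hg.2 (-(B + K + 1))
      rcases le_or_gt x (-M) with h | h
      · have := (hray' x h).1 h2; omega
      rcases le_or_gt M x with h' | h'
      · have := (hray x h').1 h1; omega
      · have := hBbound x (by omega) (by omega)
        rw [hx] at this
        rw [abs_of_neg (by omega)] at this
        omega
    · rintro ⟨h1, h2⟩
      obtain ⟨x, hx⟩ := hg.2 (B + K + 1)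
      rcases le_or_gt x (-M) with h | h
      · have := (hray' x h).2 h2; omega
      rcases le_or_gt M x with h' | h'
      · have := (hray x h').2 h1; omega
      · have := hBbound x (by omega) (by omega)
        rw [hx] at this
        rw [abs_of_pos (by omega)] at this
        omega
  rcases lt_abs.mp hMa with hpos | hneg'
  · -- g positive on positive ray
    refine ⟨1, M, Or.inl rfl, hM1, ?_, ?_⟩
    · intro x hx
      have := (hray x hx).1 hpos
      omega
    · intro x hx
      rcases lt_abs.mp hMb with h | h
      · exact absurd ⟨hpos, h⟩ hopp.1
      · have := (hray' x hx).2 (by omega)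
        omega
  · -- g negative on positive ray
    refine ⟨-1, M, Or.inr rfl, hM1, ?_, ?_⟩
    · intro x hx
      have := (hray x hx).2 (by omega)
      omega
    · intro x hx
      rcases lt_abs.mp hMb with h | h
      · have := (hray' x hx).1 h
        omega
      · exact absurd ⟨by omega, by omega⟩ hopp.2

/-- The number of points of `[-n,n]` escaping `[-n,n]` under a bi-Lipschitz bijection
is uniformly bounded. -/
lemma count_escape (g : ℤ → ℤ) (hg : Function.Bijective g) (K L : ℤ)
    (hK1 : 1 ≤ K) (hL1 : 1 ≤ L)
    (hLip : ∀ x y, |g x - g y| ≤ K * |x - y|)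
    (hco : ∀ x y, |x - y| ≤ L * |g x - g y|) :
    ∃ C : ℤ, 0 ≤ C ∧ ∀ n : ℤ, 0 ≤ n →
      (((Finset.Icc (-n) n).filter (fun x => n < |g x|)).card : ℤ) ≤ C := by
  obtain ⟨ε, M, hε, hM1, hpos, hneg⟩ := sign_lemma g hg K L hK1 hL1 hLip hco
  set g' : ℤ → ℤ := fun x => ε * g x with hg'def
  have hgabs : ∀ x, |g' x| = |g x| := by
    intro x
    simp only [hg'def, abs_mul]
    rcases hε with h | h <;> simp [h]
  have hg'bij : Function.Bijective g' := by
    constructor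
    · intro a b hab
      simp only [hg'def] at hab
      apply hg.1
      rcases hε with h | h <;> rw [h] at hab <;> omega
    · intro y
      rcases hε with h | h
      · obtain ⟨x, hx⟩ := hg.2 y; exact ⟨x, by simp [hg'def, h, hx]⟩
      · obtain ⟨x, hx⟩ := hg.2 (-y); exact ⟨x, by simp [hg'def, h, hx]⟩
  have hdiff : ∀ x y, |g' x - g' y| = |g x - g y| := by
    intro x y
    rcases hε with h | h
    · simp [hg'def, h]
    · simp only [hg'def, h]
      rw [show -1 * g x - -1 * g y = -(g x - g y) by ring, abs_neg]
  have hco' : ∀ x y, |x - y| ≤ L * |g' x - g' y| := fun x y => by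
    rw [hdiff]; exact hco x y
  have hstep' : ∀ x, |g' (x+1) - g' x| ≤ K := by
    intro x
    rw [hdiff]
    have := hLip (x+1) x
    simp only [add_sub_cancel_left] at this
    simpa using this
  obtain ⟨C, hC0, hC⟩ := count_out g' hg'bij K L M hK1 hL1 hM1 hco' hstep' hpos hneg
  refine ⟨C, hC0, ?_⟩
  intro n hn
  have : ((Finset.Icc (-n) n).filter (fun x => n < |g x|))
      = ((Finset.Icc (-n) n).filter (fun x => n < |g' x|)) := by
    apply Finset.filter_congr
    intro x _
    rw [hgabs]
  rw [this]
  exact hC n hn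

/-- Transfer: counting `A` against `g⁻¹` of the window changes counts by a bounded amount. -/
lemma filter_card_diff (g : ℤ → ℤ) (hg : Function.Bijective g) (K L : ℤ)
    (hK1 : 1 ≤ K) (hL1 : 1 ≤ L)
    (hLip : ∀ x y, |g x - g y| ≤ K * |x - y|)
    (hco : ∀ x y, |x - y| ≤ L * |g x - g y|) :
    ∃ C : ℤ, 0 ≤ C ∧ ∀ (A : Set ℤ) (n : ℤ), 0 ≤ n →
      |((((Finset.Icc (-n) n)).filter (fun x => g x ∈ A)).card : ℤ)
        - (((Finset.Icc (-n) n)).filter (fun x => x ∈ A)).card| ≤ C := by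
  classical
  obtain ⟨C, hC0, hC⟩ := count_escape g hg K L hK1 hL1 hLip hco
  refine ⟨2 * C, by omega, ?_⟩
  intro A n hn
  set S := Finset.Icc (-n) n with hSdef
  set T := S.image g with hTdef
  have hcardST : T.card = S.card := Finset.card_image_of_injective _ hg.1
  -- card of T \ S is at most C
  have hTS : (T \ S) = (S.filter (fun x => n < |g x|)).image g := by
    ext y
    simp only [hTdef, Finset.mem_sdiff, Finset.mem_image, Finset.mem_filter,
      hSdef, Finset.mem_Icc]
    constructor
    · rintro ⟨⟨x, hx1, rfl⟩, hy⟩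
      exact ⟨x, ⟨hx1, by rcases abs_cases (g x) with ⟨h1, h2⟩ | ⟨h1, h2⟩ <;> omega⟩, rfl⟩
    · rintro ⟨x, ⟨hx1, hx2⟩, rfl⟩
      exact ⟨⟨x, hx1, rfl⟩, by rcases abs_cases (g x) with ⟨h1, h2⟩ | ⟨h1, h2⟩ <;> omega⟩
  have hTSC : ((T \ S).card : ℤ) ≤ C := by
    rw [hTS, Finset.card_image_of_injective _ hg.1]
    exact hC n hn
  have hSTC : ((S \ T).card : ℤ) ≤ C := by
    have h1 : (S \ T).card + (S ∩ T).card = S.card := Finset.card_sdiff_add_card_inter S T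
    have h2 : (T \ S).card + (T ∩ S).card = T.card := Finset.card_sdiff_add_card_inter T S
    rw [Finset.inter_comm] at h2
    omega
  -- relate the two filtered counts
  have hfilt : ((S.filter (fun x => g x ∈ A)).card : ℤ)
      = ((T.filter (fun x => x ∈ A)).card : ℤ) := by
    have h1 : T.filter (fun x => x ∈ A) = (S.filter (fun a => g a ∈ A)).image g :=
      Finset.filter_image
    rw [h1, Finset.card_image_of_injective _ hg.1]
  rw [hfilt]
  have key : ∀ (U V : Finset ℤ), (U.filter (fun x => x ∈ A)).card
      ≤ (V.filter (fun x => x ∈ A)).card + (U \ V).card := by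
    intro U V
    have hsub : U.filter (fun x => x ∈ A)
        ⊆ (V.filter (fun x => x ∈ A)) ∪ (U \ V) := by
      intro x hx
      simp only [Finset.mem_filter, Finset.mem_union, Finset.mem_sdiff] at hx ⊢
      by_cases h : x ∈ V
      · exact Or.inl ⟨h, hx.2⟩
      · exact Or.inr ⟨hx.1, h⟩
    exact le_trans (Finset.card_le_card hsub) (Finset.card_union_le _ _)
  have k1 := key T S
  have k2 := key S T
  rw [abs_le]
  omega

/-- There exists a finitely additive probability measure on ℤ invariant under every
bi-Lipschitz bijection of ℤ. -/
theorem exists_invariant_mean_on_Z :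
    ∃ μ : Set ℤ → ℝ,
      (∀ A : Set ℤ, 0 ≤ μ A) ∧
      μ Set.univ = 1 ∧
      (∀ A B : Set ℤ, Disjoint A B → μ (A ∪ B) = μ A + μ B) ∧
      (∀ f : ℤ → ℤ, Function.Bijective f →
        (∃ K : ℤ, ∀ x y : ℤ, |f x - f y| ≤ K * |x - y|) →
        (∃ L : ℤ, ∀ x y : ℤ, |x - y| ≤ L * |f x - f y|) →
        ∀ A : Set ℤ, μ (f '' A) = μ A) := by
  classical
  set U : Ultrafilter ℕ := Ultrafilter.of Filter.atTop with hUdef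
  have hU : (U : Filter ℕ) ≤ Filter.atTop := Ultrafilter.of_le _
  set dens : Set ℤ → ℕ → ℝ := fun A n =>
    (((Finset.Icc (-(n:ℤ)) n).filter (fun x => x ∈ A)).card : ℝ) / (2*(n:ℝ)+1)
    with hdensdef
  have hdenom : ∀ n : ℕ, (0:ℝ) < 2*(n:ℝ)+1 := by
    intro n; positivity
  have hcardIcc : ∀ n : ℕ, (((Finset.Icc (-(n:ℤ)) n).card) : ℝ) = 2*(n:ℝ)+1 := by
    intro n
    rw [Int.card_Icc]
    have : ((n:ℤ) + 1 - -(n:ℤ)).toNat = 2*n+1 := by omega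
    rw [this]
    push_cast; ring
  have hmem : ∀ A n, dens A n ∈ Set.Icc (0:ℝ) 1 := by
    intro A n
    constructor
    · apply div_nonneg (by positivity) (le_of_lt (hdenom n))
    · rw [div_le_one (hdenom n)]
      rw [← hcardIcc n]
      exact_mod_cast Finset.card_filter_le _ _
  have hlim : ∀ A : Set ℤ, ∃ x, Filter.Tendsto (dens A) (U : Filter ℕ) (nhds x)
      ∧ x ∈ Set.Icc (0:ℝ) 1 := by
    intro A
    have hle : ↑(U.map (dens A)) ≤ Filter.principal (Set.Icc (0:ℝ) 1) := by
      rw [Ultrafilter.coe_map, Filter.le_principal_iff, Filter.mem_map]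
      exact Filter.univ_mem' (fun n => hmem A n)
    obtain ⟨x, hx, hlex⟩ := (isCompact_Icc (a := (0:ℝ)) (b := 1)).ultrafilter_le_nhds
      (U.map (dens A)) hle
    refine ⟨x, ?_, hx⟩
    rwa [Ultrafilter.coe_map] at hlex
  set μ : Set ℤ → ℝ := fun A => (hlim A).choose with hμdef
  have htend : ∀ A, Filter.Tendsto (dens A) (U : Filter ℕ) (nhds (μ A)) :=
    fun A => (hlim A).choose_spec.1
  have hicc : ∀ A, μ A ∈ Set.Icc (0:ℝ) 1 := fun A => (hlim A).choose_spec.2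
  refine ⟨μ, fun A => (hicc A).1, ?_, ?_, ?_⟩
  · -- μ univ = 1
    have h1 : dens Set.univ = fun _ => (1:ℝ) := by
      funext n
      simp only [hdensdef, Set.mem_univ, Finset.filter_true]
      rw [hcardIcc n, div_self (ne_of_gt (hdenom n))]
    have h2 : Filter.Tendsto (dens Set.univ) (U : Filter ℕ) (nhds 1) := by
      rw [h1]; exact tendsto_const_nhds
    exact tendsto_nhds_unique (htend Set.univ) h2
  · -- additivity
    intro A B hAB
    have h1 : dens (A ∪ B) = fun n => dens A n + dens B n := by
      funext n
      simp only [hdensdef]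
      rw [← add_div]
      have hdisj : Disjoint ((Finset.Icc (-(n:ℤ)) n).filter (fun x => x ∈ A))
          ((Finset.Icc (-(n:ℤ)) n).filter (fun x => x ∈ B)) := by
        rw [Finset.disjoint_filter]
        intro x _ hxA hxB
        exact Set.disjoint_left.mp hAB hxA hxB
      have hsplit : (Finset.Icc (-(n:ℤ)) n).filter (fun x => x ∈ A ∪ B)
          = ((Finset.Icc (-(n:ℤ)) n).filter (fun x => x ∈ A))
            ∪ ((Finset.Icc (-(n:ℤ)) n).filter (fun x => x ∈ B)) := by
        rw [← Finset.filter_or]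
        apply Finset.filter_congr
        intro x _
        simp [Set.mem_union]
      have hcard : ((Finset.Icc (-(n:ℤ)) n).filter (fun x => x ∈ A ∪ B)).card
          = ((Finset.Icc (-(n:ℤ)) n).filter (fun x => x ∈ A)).card
            + ((Finset.Icc (-(n:ℤ)) n).filter (fun x => x ∈ B)).card := by
        rw [hsplit]
        exact Finset.card_union_of_disjoint hdisj
      have hcast := congrArg (fun k : ℕ => (k:ℝ) / (2*(n:ℝ)+1)) hcard
      simpa using hcast
    have h2 : Filter.Tendsto (dens (A ∪ B)) (U : Filter ℕ) (nhds (μ A + μ B)) := by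
      rw [h1]; exact (htend A).add (htend B)
    exact tendsto_nhds_unique (htend (A ∪ B)) h2
  · -- invariance
    rintro f hf ⟨K, hKf⟩ ⟨L, hLf⟩ A
    have hne : f 0 - f 1 ≠ 0 := by
      intro h
      have : f 0 = f 1 := by omega
      have := hf.1 this
      omega
    have habs1 : 1 ≤ |f 0 - f 1| := Int.one_le_abs hne
    have hL1 : 1 ≤ L := by
      have h1 := hLf 0 1
      norm_num at h1
      by_contra h
      push_neg at h
      have h2 : L * |f 0 - f 1| ≤ 0 :=
        mul_nonpos_of_nonpos_of_nonneg (by omega) (abs_nonneg _)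
      omega
    have hK1 : 1 ≤ K := by
      have h1 := hKf 0 1
      norm_num at h1
      omega
    set g : ℤ → ℤ := Function.invFun f with hgdef
    have hfg : ∀ y, f (g y) = y := fun y => Function.rightInverse_invFun hf.2 y
    have hgf : ∀ x, g (f x) = x := fun x => Function.leftInverse_invFun hf.1 x
    have hgbij : Function.Bijective g := by
      constructor
      · intro a b hab
        have : f (g a) = f (g b) := by rw [hab]
        rwa [hfg, hfg] at this
      · intro z
        exact ⟨f z, hgf z⟩
    have hLipg : ∀ u v, |g u - g v| ≤ L * |u - v| := by
      intro u v
      have := hLf (g u) (g v)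
      rwa [hfg, hfg] at this
    have hcog : ∀ u v, |u - v| ≤ K * |g u - g v| := by
      intro u v
      have := hKf (g u) (g v)
      rw [hfg, hfg] at this
      omega
    obtain ⟨C, hC0, hC⟩ := filter_card_diff g hgbij L K hL1 hK1 hLipg hcog
    -- density of image equals count of A against g
    have hdensim : ∀ n : ℕ, dens (f '' A) n =
        (((Finset.Icc (-(n:ℤ)) n).filter (fun x => g x ∈ A)).card : ℝ) / (2*(n:ℝ)+1) := by
      intro n
      simp only [hdensdef]
      have heq : (Finset.Icc (-(n:ℤ)) n).filter (fun x => x ∈ f '' A)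
          = (Finset.Icc (-(n:ℤ)) n).filter (fun x => g x ∈ A) := by
        apply Finset.filter_congr
        intro x _
        constructor
        · rintro ⟨a, ha, rfl⟩
          simpa only [hgf] using ha
        · intro h
          exact ⟨g x, h, hfg x⟩
      rw [heq]
    have hbound : ∀ n : ℕ, |dens (f '' A) n - dens A n| ≤ (C:ℝ) / (2*(n:ℝ)+1) := by
      intro n
      rw [hdensim n]
      simp only [hdensdef]
      rw [div_sub_div_same, abs_div, abs_of_pos (hdenom n)]
      rw [div_le_div_iff_of_pos_right (hdenom n)]
      have hint := hC A (n:ℤ) (by positivity)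
      exact_mod_cast hint
    have hzero : Filter.Tendsto (fun n : ℕ => (C:ℝ) / (2*(n:ℝ)+1)) Filter.atTop (nhds 0) := by
      apply Filter.Tendsto.div_atTop tendsto_const_nhds
      apply Filter.tendsto_atTop_add_const_right _ 1
      exact (tendsto_natCast_atTop_atTop (R := ℝ)).const_mul_atTop (by norm_num)
    have hdiff : Filter.Tendsto (fun n => dens (f '' A) n - dens A n)
        Filter.atTop (nhds 0) := by
      apply squeeze_zero_norm _ hzero
      intro n
      rw [Real.norm_eq_abs]
      exact hbound n
    have hdiffU := hdiff.mono_left hU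
    have hfinal : Filter.Tendsto (dens (f '' A)) (U : Filter ℕ) (nhds (μ A)) := by
      have h5 := (htend A).add hdiffU
      have h6 : (fun n => dens A n + (dens (f '' A) n - dens A n)) = dens (f '' A) := by
        funext n; ring
      rw [h6, add_zero] at h5
      exact h5
    exact tendsto_nhds_unique (htend (f '' A)) hfinal
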